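/- The graph on the set B^n of non-crossing perfect matchings of {1,...,2n}, with edges given by single nesting/unnesting moves (a ~ b iff a → b or b → a), is connected; consequently the distance function d(a,b) is well-defined and finite for all a, b ∈ B^n. -/

import Mathlib

def IsMatching (n : ℕ) (f : ℕ → ℕ) : Prop :=
  (∀ m, 1 ≤ m → m ≤ 2 * n → (1 ≤ f m ∧ f m ≤ 2 * n ∧ f (f m) = m ∧ f m ≠ m)) ∧
  (∀ m, (m < 1 ∨ 2 * n < m) → f m = m)

def NonCrossing (f : ℕ → ℕ) : Prop :=
  ¬ ∃ i j k l : ℕ, i < j ∧ j < k ∧ k < l ∧ f i = k ∧ f j = l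

def MoveAt (a b : ℕ → ℕ) (i j k l : ℕ) : Prop :=
  i < j ∧ j < k ∧ k < l ∧
  a i = j ∧ a j = i ∧ a k = l ∧ a l = k ∧
  b i = l ∧ b l = i ∧ b j = k ∧ b k = j ∧
  ∀ m, m ∉ ({i, j, k, l} : Set ℕ) → b m = a m

def Move (a b : ℕ → ℕ) : Prop := ∃ i j k l, MoveAt a b i j k l

def Bn (n : ℕ) : Type := {f : ℕ → ℕ // IsMatching n f ∧ NonCrossing f}

def Adj (a b : ℕ → ℕ) : Prop := Move a b ∨ Move b a

def IsPath (n m : ℕ) (p : ℕ → Bn n) (a b : Bn n) : Prop :=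
  p 0 = a ∧ p m = b ∧ ∀ i < m, Adj (p i).1 (p (i + 1)).1

-- auxiliary
def eFun (n : ℕ) (m : ℕ) : ℕ :=
  if 1 ≤ m ∧ m ≤ 2 * n then (if m % 2 = 1 then m + 1 else m - 1) else m

lemma eFun_matching (n : ℕ) : IsMatching n (eFun n) := by
  constructor
  · intro m h1 h2
    rcases Nat.mod_two_eq_zero_or_one m with hm2 | hm2
    · have e1 : eFun n m = m - 1 := by unfold eFun; rw [if_pos ⟨h1, h2⟩, if_neg (by omega)]
      have e2 : eFun n (m - 1) = m := by
        unfold eFun; rw [if_pos (by omega), if_pos (by omega)]; omega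
      rw [e1, e2]; omega
    · have hlt : m + 1 ≤ 2 * n := by omega
      have e1 : eFun n m = m + 1 := by unfold eFun; rw [if_pos ⟨h1, h2⟩, if_pos hm2]
      have e2 : eFun n (m + 1) = m := by
        unfold eFun; rw [if_pos (by omega), if_neg (by omega)]; omega
      rw [e1, e2]; omega
  · intro m hm; unfold eFun; rw [if_neg (by omega)]

lemma eFun_le (n m : ℕ) : eFun n m ≤ m + 1 := by
  unfold eFun
  rcases Nat.lt_or_ge m 1 with h | h
  · rw [if_neg (by omega)]; omega
  · split
    · split <;> omega
    · omega

lemma eFun_nc (n : ℕ) : NonCrossing (eFun n) := by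
  rintro ⟨i, j, k, l, h1, h2, h3, hik, hjl⟩
  have := eFun_le n i
  omega

def eB (n : ℕ) : Bn n := ⟨eFun n, eFun_matching n, eFun_nc n⟩

def Phi (n : ℕ) (f : ℕ → ℕ) : ℕ := ∑ m ∈ Finset.Icc 1 (2 * n), (f m - m)

def AdjB (n : ℕ) (x y : Bn n) : Prop := Adj x.1 y.1

lemma base_eq {n : ℕ} {f : ℕ → ℕ} (hm : IsMatching n f)
    (h : ∀ m, 1 ≤ m → m ≤ 2 * n → f m ≤ m + 1) : f = eFun n := by
  have key : ∀ m, 1 ≤ m → m ≤ 2 * n → f m = (if m % 2 = 1 then m + 1 else m - 1) := by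
    intro m
    induction m using Nat.strong_induction_on with
    | _ m IH =>
      intro h1 h2
      rcases Nat.mod_two_eq_zero_or_one m with hm2 | hm2
      · -- even : f m = m - 1
        have hm1 : (m - 1) % 2 = 1 := by omega
        have h3 : f (m - 1) = m := by
          have := IH (m - 1) (by omega) (by omega) (by omega)
          rw [if_pos hm1] at this; omega
        have := (hm.1 (m - 1) (by omega) (by omega)).2.2.1
        rw [h3] at this
        rw [if_neg (by omega)]; omega
      · -- odd : f m = m + 1
        obtain ⟨hb1, hb2, hb3, hb4⟩ := hm.1 m h1 h2
        rcases Nat.lt_or_ge (f m) m with hlt | hge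
        · exfalso
          have hp := IH (f m) hlt hb1 (by omega)
          rw [hb3] at hp
          split at hp <;> omega
        · have := h m h1 h2
          rw [if_pos hm2]; omega
  funext m
  unfold eFun
  split
  · next hcond => exact key m hcond.1 hcond.2
  · next hcond => exact hm.2 m (by omega)

lemma step {n : ℕ} {f : ℕ → ℕ} (hm : IsMatching n f) (hnc : NonCrossing f)
    (hex : ∃ m, 1 ≤ m ∧ m ≤ 2 * n ∧ m + 1 < f m) :
    ∃ g, IsMatching n g ∧ NonCrossing g ∧ Move g f ∧ Phi n g < Phi n f := by
  classical
  set s : Finset ℕ := (Finset.Icc 1 (2 * n)).filter (fun m => m + 1 < f m) with hs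
  have hne : s.Nonempty := by
    obtain ⟨m, h1, h2, h3⟩ := hex
    exact ⟨m, by simp [hs, Finset.mem_filter, Finset.mem_Icc]; omega⟩
  obtain ⟨i, his, hmin⟩ := s.exists_min_image (fun m => f m - m) hne
  rw [hs, Finset.mem_filter, Finset.mem_Icc] at his
  obtain ⟨⟨hi1, hi2⟩, hil⟩ := his
  set l := f i with hl
  obtain ⟨hfi1, hfi2, hfi3, hfi4⟩ := hm.1 i hi1 hi2
  -- l = f i, i + 1 < l ≤ 2n, f l = i
  have hfl : f l = i := hfi3
  -- show f (i+1) = i+2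
  obtain ⟨hq1, hq2, hq3, hq4⟩ := hm.1 (i + 1) (by omega) (by omega)
  set q := f (i + 1) with hqdef
  have hql : q ≠ l := by intro h; rw [h, hfl] at hq3; omega
  have hqgtl : ¬ (l < q) := by
    intro h
    exact hnc ⟨i, i + 1, l, q, by omega, by omega, h, hl.symm, rfl⟩
  have hqi : q ≠ i := by intro h; rw [h] at hq3; omega
  have hqlti : ¬ (q < i) := by
    intro h
    exact hnc ⟨q, i, i + 1, l, h, by omega, by omega, hq3, hl.symm⟩
  have hq5 : i + 1 < q := by omega
  have hq : q = i + 2 := by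
    by_contra hne2
    have hmem : i + 1 ∈ s := by
      rw [hs, Finset.mem_filter, Finset.mem_Icc]
      exact ⟨⟨by omega, by omega⟩, by omega⟩
    have hmin' : f i - i ≤ f (i + 1) - (i + 1) := hmin (i + 1) hmem
    omega
  have hq' : f (i + 1) = i + 2 := hq
  have hlgt : i + 2 < l := by omega
  have hfi2' : f (i + 2) = i + 1 := by rw [← hq', hq3]
  set g : ℕ → ℕ := fun m =>
    if m = i then i + 1 else if m = i + 1 then i else if m = i + 2 then l
    else if m = l then i + 2 else f m with hg
  have gval : ∀ m, m ≠ i → m ≠ i + 1 → m ≠ i + 2 → m ≠ l → g m = f m := by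
    intro m a b c d; simp [hg, a, b, c, d]
  have gi : g i = i + 1 := by simp [hg]
  have gi1 : g (i + 1) = i := by simp [hg]
  have gi2 : g (i + 2) = l := by simp [hg]
  have ggl : g l = i + 2 := by
    have n1 : l ≠ i := by omega
    have n2 : l ≠ i + 1 := by omega
    have n3 : l ≠ i + 2 := by omega
    simp [hg, n1, n2, n3]
  have hmatch : IsMatching n g := by
    constructor
    · intro m h1 h2
      rcases eq_or_ne m i with rfl | m1
      · rw [gi, gi1]; omega
      rcases eq_or_ne m (i + 1) with rfl | m2
      · rw [gi1, gi]; omega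
      rcases eq_or_ne m (i + 2) with rfl | m3
      · rw [gi2, ggl]; omega
      rcases eq_or_ne m l with rfl | m4
      · rw [ggl, gi2]; omega
      · rw [gval m m1 m2 m3 m4]
        obtain ⟨b1, b2, b3, b4⟩ := hm.1 m h1 h2
        refine ⟨b1, b2, ?_, b4⟩
        have c1 : f m ≠ i := by intro h; rw [← h] at hl; rw [b3] at hl; omega
        have c2 : f m ≠ i + 1 := by intro h; rw [h] at b3; rw [hq'] at b3; omega
        have c3 : f m ≠ i + 2 := by intro h; rw [h] at b3; rw [hfi2'] at b3; omega
        have c4 : f m ≠ l := by intro h; rw [h] at b3; rw [hfl] at b3; omega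
        rw [gval (f m) c1 c2 c3 c4, b3]
    · intro m hmm
      have m1 : m ≠ i := by omega
      have m2 : m ≠ i + 1 := by omega
      have m3 : m ≠ i + 2 := by omega
      have m4 : m ≠ l := by omega
      rw [gval m m1 m2 m3 m4, hm.2 m hmm]
  have hncg : NonCrossing g := by
    rintro ⟨p, q', r, t, h1, h2, h3, hp, hqq⟩
    rcases eq_or_ne p i with rfl | p1
    · rw [gi] at hp; omega
    rcases eq_or_ne p (i + 1) with rfl | p2
    · rw [gi1] at hp; omega
    rcases eq_or_ne p (i + 2) with rfl | p3
    · rw [gi2] at hp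
      subst hp
      have q1 : q' ≠ i := by omega
      have q2 : q' ≠ i + 1 := by omega
      have q3 : q' ≠ i + 2 := by omega
      have q4 : q' ≠ l := by omega
      rw [gval q' q1 q2 q3 q4] at hqq
      exact hnc ⟨i, q', l, t, by omega, by omega, by omega, hl.symm, hqq⟩
    rcases eq_or_ne p l with rfl | p4
    · rw [ggl] at hp; omega
    rw [gval p p1 p2 p3 p4] at hp
    rcases eq_or_ne q' i with rfl | q1
    · rw [gi] at hqq; omega
    rcases eq_or_ne q' (i + 1) with rfl | q2
    · rw [gi1] at hqq; omega
    rcases eq_or_ne q' (i + 2) with rfl | q3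
    · rw [gi2] at hqq
      subst hqq
      have hpi : p < i := by omega
      exact hnc ⟨p, i, r, l, hpi, by omega, by omega, hp, hl.symm⟩
    rcases eq_or_ne q' l with rfl | q4
    · rw [ggl] at hqq; omega
    rw [gval q' q1 q2 q3 q4] at hqq
    exact hnc ⟨p, q', r, t, h1, h2, h3, hp, hqq⟩
  have hmove : Move g f := by
    refine ⟨i, i + 1, i + 2, l, by omega, by omega, hlgt, gi, gi1, gi2, ggl,
      hl.symm, hfl, hq', hfi2', ?_⟩
    intro m hmem
    simp only [Set.mem_insert_iff, Set.mem_singleton_iff] at hmem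
    push_neg at hmem
    obtain ⟨m1, m2, m3, m4⟩ := hmem
    rw [gval m m1 m2 m3 m4]
  have hphi : Phi n g < Phi n f := by
    have hsub : ({i, i + 1, i + 2, l} : Finset ℕ) ⊆ Finset.Icc 1 (2 * n) := by
      intro x hx
      simp only [Finset.mem_insert, Finset.mem_singleton] at hx
      rw [Finset.mem_Icc]
      rcases hx with rfl | rfl | rfl | rfl <;> omega
    have hdiff : ∀ m ∈ Finset.Icc 1 (2 * n) \ ({i, i + 1, i + 2, l} : Finset ℕ),
        g m - m = f m - m := by
      intro m hmm
      rw [Finset.mem_sdiff] at hmm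
      simp only [Finset.mem_insert, Finset.mem_singleton] at hmm
      push_neg at hmm
      obtain ⟨_, m1, m2, m3, m4⟩ := hmm
      rw [gval m m1 m2 m3 m4]
    have hsumset : ∀ h : ℕ → ℕ,
        ∑ m ∈ ({i, i + 1, i + 2, l} : Finset ℕ), h m = h i + h (i + 1) + h (i + 2) + h l := by
      intro h
      rw [show ({i, i + 1, i + 2, l} : Finset ℕ) = insert i (insert (i+1) (insert (i+2) {l})) from rfl]
      rw [Finset.sum_insert (by simp; omega), Finset.sum_insert (by simp; omega),
        Finset.sum_insert (by simp; omega), Finset.sum_singleton]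
      ring
    have e1 : Phi n f = (∑ m ∈ Finset.Icc 1 (2 * n) \ ({i, i + 1, i + 2, l} : Finset ℕ), (f m - m))
        + ((f i - i) + (f (i+1) - (i+1)) + (f (i+2) - (i+2)) + (f l - l)) := by
      rw [Phi, ← Finset.sum_sdiff hsub, hsumset (fun m => f m - m)]
    have e2 : Phi n g = (∑ m ∈ Finset.Icc 1 (2 * n) \ ({i, i + 1, i + 2, l} : Finset ℕ), (g m - m))
        + ((g i - i) + (g (i+1) - (i+1)) + (g (i+2) - (i+2)) + (g l - l)) := by
      rw [Phi, ← Finset.sum_sdiff hsub, hsumset (fun m => g m - m)]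
    rw [e1, e2, Finset.sum_congr rfl hdiff]
    rw [gi, gi1, gi2, ggl, ← hl, hq', hfi2', hfl]
    omega
  exact ⟨g, hmatch, hncg, hmove, hphi⟩

lemma reach (n : ℕ) : ∀ (N : ℕ) (x : Bn n), Phi n x.1 ≤ N →
    Relation.ReflTransGen (AdjB n) x (eB n) := by
  intro N
  induction N with
  | zero =>
    intro x hx
    by_cases hb : ∀ m, 1 ≤ m → m ≤ 2 * n → x.1 m ≤ m + 1
    · have : x = eB n := Subtype.ext (base_eq x.2.1 hb)
      rw [this]
    · push_neg at hb
      obtain ⟨m, h1, h2, h3⟩ := hb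
      obtain ⟨g, _, _, _, hphi⟩ := step x.2.1 x.2.2 ⟨m, h1, h2, h3⟩
      omega
  | succ N IH =>
    intro x hx
    by_cases hb : ∀ m, 1 ≤ m → m ≤ 2 * n → x.1 m ≤ m + 1
    · have : x = eB n := Subtype.ext (base_eq x.2.1 hb)
      rw [this]
    · push_neg at hb
      obtain ⟨m, h1, h2, h3⟩ := hb
      obtain ⟨g, hmg, hncg, hmove, hphi⟩ := step x.2.1 x.2.2 ⟨m, h1, h2, h3⟩
      have hadj : AdjB n x ⟨g, hmg, hncg⟩ := Or.inr hmove
      exact Relation.ReflTransGen.head hadj (IH ⟨g, hmg, hncg⟩ (show Phi n g ≤ N by omega))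

lemma path_exists {n : ℕ} {a b : Bn n} (h : Relation.ReflTransGen (AdjB n) a b) :
    ∃ m p, IsPath n m p a b := by
  induction h with
  | refl => exact ⟨0, fun _ => a, rfl, rfl, fun i hi => absurd hi (by omega)⟩
  | @tail c b' _ hcb ih =>
    obtain ⟨m, p, h0, hmn, hs⟩ := ih
    refine ⟨m + 1, fun t => if t ≤ m then p t else b', ?_, ?_, ?_⟩
    · simp [h0]
    · simp
    · intro j hj
      rcases Nat.lt_or_ge j m with hjm | hjm
      · simp only [if_pos (by omega : j ≤ m), if_pos (by omega : j + 1 ≤ m)]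
        exact hs j hjm
      · have hjm' : j = m := by omega
        subst hjm'
        simp only [if_pos le_rfl, if_neg (by omega : ¬ j + 1 ≤ j)]
        rw [hmn]
        exact hcb

theorem stmt18 (n : ℕ) (a b : Bn n) :
    Relation.ReflTransGen Adj a.1 b.1 ∧
    ∃ (m : ℕ) (p : ℕ → Bn n), IsPath n m p a b := by
  have hsym : Symmetric (AdjB n) := fun x y h => Or.symm h
  have ha := reach n (Phi n a.1) a le_rfl
  have hb := reach n (Phi n b.1) b le_rfl
  have hab : Relation.ReflTransGen (AdjB n) a b :=
    ha.trans ((@Relation.ReflTransGen.stdSymm _ _ ⟨hsym⟩).symm _ _ hb)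
  exact ⟨Relation.ReflTransGen.lift Subtype.val (fun x y h => h) _ _ hab, path_exists hab⟩
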